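/- A bicomplex matrix A ∈ 𝔹ℂ^{n×n} is hyperbolic positive if and only if there exists a hyperbolic positive matrix C ∈ 𝔹ℂ^{n×n} such that A = C². -/

import Mathlib

open Complex Matrix Kronecker BigOperators

open scoped ComplexOrder

/-- Bicomplex numbers, modeled as pairs `(z₁, z₂) ∈ ℂ × ℂ` representing `z₁ + j z₂`.
Addition is the componentwise (Prod) addition. -/
abbrev BC : Type := ℂ × ℂ

noncomputable section

/-- Bicomplex multiplication: `(z₁,z₂)·(w₁,w₂) = (z₁w₁ − z₂w₂, z₁w₂ + z₂w₁)`. -/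
def bcMul (z w : BC) : BC := (z.1 * w.1 - z.2 * w.2, z.1 * w.2 + z.2 * w.1)

/-- The `*`-conjugate `Z* = conj z₁ − j conj z₂`. -/
def bcStar (z : BC) : BC := ((starRingEnd ℂ) z.1, -((starRingEnd ℂ) z.2))

/-- First idempotent component `λ₁ = z₁ − i z₂`. -/
def idem1 (z : BC) : ℂ := z.1 - Complex.I * z.2

/-- Second idempotent component `λ₂ = z₁ + i z₂`. -/
def idem2 (z : BC) : ℂ := z.1 + Complex.I * z.2

/-- Membership in `𝔻⁺`: both idempotent components are nonnegative real numbers. -/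
def inDplus (z : BC) : Prop :=
  (idem1 z).im = 0 ∧ 0 ≤ (idem1 z).re ∧ (idem2 z).im = 0 ∧ 0 ≤ (idem2 z).re

/-- A bicomplex matrix `A = A₁ + j A₂` is a pair of complex matrices. -/
abbrev BCMat (I J : Type) : Type := Matrix I J ℂ × Matrix I J ℂ

/-- Bicomplex matrix multiplication, induced by bicomplex multiplication. -/
def bmul {I J K : Type} [Fintype J] (A : BCMat I J) (B : BCMat J K) : BCMat I K :=
  (A.1 * B.1 - A.2 * B.2, A.1 * B.2 + A.2 * B.1)

/-- `(A*)ᵗ`: the entrywise `*`-conjugate followed by transpose. -/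
def bcStarT {I J : Type} (A : BCMat I J) : BCMat J I := (A.1ᴴ, -(A.2ᴴ))

/-- The `(j,k)` entry of a bicomplex matrix, as a bicomplex number. -/
def bcEntry {I J : Type} (A : BCMat I J) (j : I) (k : J) : BC := (A.1 j k, A.2 j k)

/-- First idempotent component `𝒜₁ = A₁ − i A₂` of a bicomplex matrix. -/
def midem1 {I J : Type} (A : BCMat I J) : Matrix I J ℂ := A.1 - Complex.I • A.2

/-- Second idempotent component `𝒜₂ = A₁ + i A₂` of a bicomplex matrix. -/
def midem2 {I J : Type} (A : BCMat I J) : Matrix I J ℂ := A.1 + Complex.I • A.2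

/-- The bicomplex number `(c*)ᵗ · A · c`. -/
def quadForm {I : Type} [Fintype I] (A : BCMat I I) (c : I → BC) : BC :=
  ∑ j, ∑ k, bcMul (bcStar (c j)) (bcMul (bcEntry A j k) (c k))

/-- `A` is hyperbolic positive if `(c*)ᵗ · A · c ∈ 𝔻⁺` for every bicomplex vector `c`. -/
def HypPos {I : Type} [Fintype I] (A : BCMat I I) : Prop :=
  ∀ c : I → BC, inDplus (quadForm A c)

/-- Bicomplex trace `Tr(A) = Tr(A₁) + j Tr(A₂)`. -/
def bcTrace {I : Type} [Fintype I] (A : BCMat I I) : BC := (A.1.trace, A.2.trace)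

/-- The bicomplex tensor product
`A ⊗ⱼ B = (A₁⊗B₁ − A₂⊗B₂) + j (A₁⊗B₂ + A₂⊗B₁)`. -/
def bkron {I J K L : Type} (A : BCMat I J) (B : BCMat K L) : BCMat (I × K) (J × L) :=
  (A.1 ⊗ₖ B.1 - A.2 ⊗ₖ B.2, A.1 ⊗ₖ B.2 + A.2 ⊗ₖ B.1)

end

noncomputable section

/- ### Auxiliary lemmas -/

lemma idem1_bcMul (z w : BC) : idem1 (bcMul z w) = idem1 z * idem1 w := by
  simp only [idem1, bcMul]
  linear_combination (-(z.2 * w.2)) * Complex.I_sq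

lemma idem2_bcMul (z w : BC) : idem2 (bcMul z w) = idem2 z * idem2 w := by
  simp only [idem2, bcMul]
  linear_combination (-(z.2 * w.2)) * Complex.I_sq

lemma idem1_bcStar (z : BC) : idem1 (bcStar z) = (starRingEnd ℂ) (idem1 z) := by
  simp only [idem1, bcStar, map_sub, _root_.map_mul, Complex.conj_I]
  ring

lemma idem2_bcStar (z : BC) : idem2 (bcStar z) = (starRingEnd ℂ) (idem2 z) := by
  simp only [idem2, bcStar, map_add, _root_.map_mul, Complex.conj_I]
  ring

lemma idem1_sum {I : Type} (s : Finset I) (f : I → BC) :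
    idem1 (∑ j ∈ s, f j) = ∑ j ∈ s, idem1 (f j) := by
  simp only [idem1, Prod.fst_sum, Prod.snd_sum, Finset.mul_sum, Finset.sum_sub_distrib]

lemma idem2_sum {I : Type} (s : Finset I) (f : I → BC) :
    idem2 (∑ j ∈ s, f j) = ∑ j ∈ s, idem2 (f j) := by
  simp only [idem2, Prod.fst_sum, Prod.snd_sum, Finset.mul_sum, Finset.sum_add_distrib]

lemma idem1_quadForm {n : ℕ} (A : BCMat (Fin n) (Fin n)) (c : Fin n → BC) :
    idem1 (quadForm A c) =
      star (fun j => idem1 (c j)) ⬝ᵥ (midem1 A *ᵥ fun j => idem1 (c j)) := by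
  rw [quadForm, idem1_sum]
  simp only [dotProduct, mulVec, Pi.star_apply, Finset.mul_sum]
  refine Finset.sum_congr rfl fun j _ => ?_
  rw [idem1_sum]
  refine Finset.sum_congr rfl fun k _ => ?_
  rw [idem1_bcMul, idem1_bcMul, idem1_bcStar]
  simp only [midem1, Matrix.sub_apply, Matrix.smul_apply, smul_eq_mul, Complex.star_def,
    bcEntry, idem1]

lemma idem2_quadForm {n : ℕ} (A : BCMat (Fin n) (Fin n)) (c : Fin n → BC) :
    idem2 (quadForm A c) =
      star (fun j => idem2 (c j)) ⬝ᵥ (midem2 A *ᵥ fun j => idem2 (c j)) := by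
  rw [quadForm, idem2_sum]
  simp only [dotProduct, mulVec, Pi.star_apply, Finset.mul_sum]
  refine Finset.sum_congr rfl fun j _ => ?_
  rw [idem2_sum]
  refine Finset.sum_congr rfl fun k _ => ?_
  rw [idem2_bcMul, idem2_bcMul, idem2_bcStar]
  simp only [midem2, Matrix.add_apply, Matrix.smul_apply, smul_eq_mul, Complex.star_def,
    bcEntry, idem2]

lemma inDplus_iff (z : BC) : inDplus z ↔ 0 ≤ idem1 z ∧ 0 ≤ idem2 z := by
  simp only [inDplus, Complex.nonneg_iff]
  tauto

lemma posSemidef_of_quad {n : ℕ} (M : Matrix (Fin n) (Fin n) ℂ)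
    (h : ∀ x : Fin n → ℂ, 0 ≤ star x ⬝ᵥ M *ᵥ x) : M.PosSemidef := by
  refine Matrix.PosSemidef.of_dotProduct_mulVec_nonneg ?_ h
  rw [Matrix.isHermitian_iff_isSymmetric, LinearMap.isSymmetric_iff_inner_map_self_real]
  intro v
  obtain ⟨x, rfl⟩ := (WithLp.equiv 2 (Fin n → ℂ)).symm.surjective v
  simp only [WithLp.equiv_symm_apply, Matrix.toLpLin_toLp, EuclideanSpace.inner_toLp_toLp,
    Matrix.toLin'_apply, dotProduct_comm x]
  have h2 := h x
  rw [Complex.nonneg_iff] at h2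
  have key : star (M *ᵥ x) ⬝ᵥ x = star (star x ⬝ᵥ (M *ᵥ x)) := by
    rw [star_dotProduct]
  have him : (star x ⬝ᵥ (M *ᵥ x)).im = 0 := h2.2.symm
  have hre : star (star x ⬝ᵥ (M *ᵥ x)) = star x ⬝ᵥ (M *ᵥ x) :=
    Complex.conj_eq_iff_im.mpr him
  rw [key, hre]
  exact Complex.conj_eq_iff_im.mpr him

lemma hypPos_iff_psd {n : ℕ} (A : BCMat (Fin n) (Fin n)) :
    HypPos A ↔ (midem1 A).PosSemidef ∧ (midem2 A).PosSemidef := by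
  constructor
  · intro h
    constructor
    · refine posSemidef_of_quad _ fun x => ?_
      have hc := h (fun j => (x j / 2, Complex.I * x j / 2))
      rw [inDplus_iff] at hc
      have h1 := hc.1
      rw [idem1_quadForm] at h1
      have : (fun j => idem1 (x j / 2, Complex.I * x j / 2)) = x := by
        funext j; simp only [idem1]
        linear_combination (-(x j)/2) * Complex.I_sq
      rwa [this] at h1
    · refine posSemidef_of_quad _ fun x => ?_
      have hc := h (fun j => (x j / 2, -(Complex.I * x j) / 2))
      rw [inDplus_iff] at hc
      have h2 := hc.2
      rw [idem2_quadForm] at h2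
      have : (fun j => idem2 (x j / 2, -(Complex.I * x j) / 2)) = x := by
        funext j; simp only [idem2]
        linear_combination (-(x j)/2) * Complex.I_sq
      rwa [this] at h2
  · rintro ⟨h1, h2⟩ c
    rw [inDplus_iff, idem1_quadForm, idem2_quadForm]
    exact ⟨h1.dotProduct_mulVec_nonneg _, h2.dotProduct_mulVec_nonneg _⟩

lemma midem1_bmul {n : ℕ} (A B : BCMat (Fin n) (Fin n)) :
    midem1 (bmul A B) = midem1 A * midem1 B := by
  simp only [midem1, bmul, sub_mul, mul_sub, smul_mul_assoc, Matrix.mul_smul, smul_smul,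
    Complex.I_mul_I, neg_smul, one_smul, smul_add, smul_sub]
  abel

lemma midem2_bmul {n : ℕ} (A B : BCMat (Fin n) (Fin n)) :
    midem2 (bmul A B) = midem2 A * midem2 B := by
  simp only [midem2, bmul, add_mul, mul_add, smul_mul_assoc, Matrix.mul_smul, smul_smul,
    Complex.I_mul_I, neg_smul, one_smul, smul_sub, smul_add]
  abel

lemma bcmat_ext {n : ℕ} (A B : BCMat (Fin n) (Fin n))
    (h1 : midem1 A = midem1 B) (h2 : midem2 A = midem2 B) : A = B := by
  simp only [midem1, midem2] at h1 h2
  have ha : A.1 = B.1 := by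
    have hs := congrArg₂ (· + ·) h1 h2
    have hq : (2 : ℂ) • A.1 = (2 : ℂ) • B.1 := by
      linear_combination (norm := module) hs
    exact smul_right_injective _ (two_ne_zero) hq
  have hb : A.2 = B.2 := by
    have hs := congrArg₂ (· - ·) h2 h1
    have hq : ((2 : ℂ) * Complex.I) • A.2 = ((2 : ℂ) * Complex.I) • B.2 := by
      linear_combination (norm := module) hs
    exact smul_right_injective _ (mul_ne_zero two_ne_zero Complex.I_ne_zero) hq
  exact Prod.ext ha hb

open scoped MatrixOrder in
def psdSqrt {n : ℕ} (M : Matrix (Fin n) (Fin n) ℂ) : Matrix (Fin n) (Fin n) ℂ := CFC.sqrt M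

open scoped MatrixOrder in
lemma psdSqrt_psd {n : ℕ} {M : Matrix (Fin n) (Fin n) ℂ} (_h : M.PosSemidef) :
    (psdSqrt M).PosSemidef := (CFC.sqrt_nonneg M).posSemidef

open scoped MatrixOrder in
lemma psdSqrt_mul {n : ℕ} {M : Matrix (Fin n) (Fin n) ℂ} (h : M.PosSemidef) :
    psdSqrt M * psdSqrt M = M := CFC.sqrt_mul_sqrt_self M h.nonneg

lemma midem_ofIdem {n : ℕ} (P Q : Matrix (Fin n) (Fin n) ℂ) :
    midem1 (((1 : ℂ)/2) • (P + Q), (Complex.I/2) • (P - Q)) = P ∧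
    midem2 (((1 : ℂ)/2) • (P + Q), (Complex.I/2) • (P - Q)) = Q := by
  constructor
  · simp only [midem1, smul_smul]
    have : Complex.I * (Complex.I / 2) = -(1/2) := by
      rw [mul_div_assoc']
      rw [Complex.I_mul_I]
      norm_num
    rw [this]
    match_scalars <;> ring
  · simp only [midem2, smul_smul]
    have : Complex.I * (Complex.I / 2) = -(1/2) := by
      rw [mul_div_assoc']
      rw [Complex.I_mul_I]
      norm_num
    rw [this]
    match_scalars <;> ring

end

noncomputable section

/-- `A` is hyperbolic positive iff `A = C²` for some hyperbolic
positive matrix `C`. -/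
theorem hypPos_iff_sq {n : ℕ} (A : BCMat (Fin n) (Fin n)) :
    HypPos A ↔ ∃ C : BCMat (Fin n) (Fin n), HypPos C ∧ A = bmul C C := by
  constructor
  · intro hA
    obtain ⟨h1, h2⟩ := (hypPos_iff_psd A).mp hA
    set S1 := psdSqrt (midem1 A) with hS1
    set S2 := psdSqrt (midem2 A) with hS2
    refine ⟨(((1 : ℂ)/2) • (S1 + S2), (Complex.I/2) • (S1 - S2)), ?_, ?_⟩
    · rw [hypPos_iff_psd]
      rw [(midem_ofIdem S1 S2).1, (midem_ofIdem S1 S2).2]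
      exact ⟨psdSqrt_psd h1, psdSqrt_psd h2⟩
    · refine bcmat_ext _ _ ?_ ?_
      · rw [midem1_bmul, (midem_ofIdem S1 S2).1, psdSqrt_mul h1]
      · rw [midem2_bmul, (midem_ofIdem S1 S2).2, psdSqrt_mul h2]
  · rintro ⟨C, hC, rfl⟩
    obtain ⟨h1, h2⟩ := (hypPos_iff_psd C).mp hC
    rw [hypPos_iff_psd, midem1_bmul, midem2_bmul]
    constructor
    · have := Matrix.posSemidef_conjTranspose_mul_self (midem1 C)
      rwa [h1.1] at this
    · have := Matrix.posSemidef_conjTranspose_mul_self (midem2 C)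
      rwa [h2.1] at this

end
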